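/- arXiv:2003.12767 — 2 statements merged into one kernel-verified Lean document; each statement's English description precedes it below -/
import Mathlib

section
/- Let I be a nonempty finite index set, let (X_i)_{i∈I} be measurable spaces, let μ be a probability measure on Π_{i∈I} X_i with i-th marginals μ_i, and let (ν_i)_{i∈I} be probability measures on the X_i such that μ is absolutely continuous with respect to ⊗_{i∈I} ν_i. Then the Pythagorean identity D(μ ‖ ⊗_{i∈I} ν_i) = D(μ ‖ ⊗_{i∈I} μ_i) + Σ_{i∈I} D(μ_i ‖ ν_i) holds, where all three quantities are taken in [0,∞]. -/
open MeasureTheory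
open scoped ENNReal NNReal Classical

/-- The Kullback–Leibler divergence `D(μ‖ν) ∈ [0,∞]`: it equals
`∫ log(dμ/dν) dμ` when `μ ≪ ν` (and this integral is well defined),
and `+∞` otherwise. -/
noncomputable def klDiv {α : Type*} [MeasurableSpace α] (μ ν : Measure α) : ℝ≥0∞ :=
  if μ ≪ ν ∧ Integrable (fun x => Real.log ((μ.rnDeriv ν x).toReal)) μ then
    ENNReal.ofReal (∫ x, Real.log ((μ.rnDeriv ν x).toReal) ∂μ)
  else ⊤

section KLAux
open MeasureTheory.Measure Set

theorem my_lintegral_fin_prod {n : ℕ} {E : Fin n → Type*} [∀ i, MeasurableSpace (E i)]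
    (μ : ∀ i, Measure (E i)) [∀ i, SigmaFinite (μ i)]
    (f : ∀ i, E i → ℝ≥0∞) (hf : ∀ i, Measurable (f i)) :
    ∫⁻ x, ∏ i, f i (x i) ∂Measure.pi μ = ∏ i, ∫⁻ x, f i x ∂μ i := by
  induction n with
  | zero => simp [lintegral_const]
  | succ n ih =>
    have A := (measurePreserving_piFinSuccAbove μ 0).symm
    have hmeas : Measurable fun x : ∀ i, E i => ∏ i, f i (x i) :=
      Finset.measurable_prod _ fun i _ => (hf i).comp (measurable_pi_apply i)
    calc _ = ∫⁻ x : E 0 × ((i : Fin n) → E (Fin.succ i)),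
            f 0 x.1 * ∏ i : Fin n, f (Fin.succ i) (x.2 i)
            ∂((μ 0).prod (Measure.pi (fun i ↦ μ i.succ))) := by
          rw [← A.lintegral_comp hmeas]
          simp_rw [Fin.prod_univ_succ]
          rfl
      _ = (∫⁻ x, f 0 x ∂μ 0) * ∏ i : Fin n, ∫⁻ x, f (Fin.succ i) x ∂(μ i.succ) := by
          rw [lintegral_prod_mul (hf 0).aemeasurable
            (show Measurable fun y : ∀ j : Fin n, E j.succ => ∏ x : Fin n, f x.succ (y x) from
              Finset.measurable_prod Finset.univ fun (i : Fin n) _ =>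
                ((hf i.succ).comp (measurable_pi_apply i))).aemeasurable]
          rw [ih (fun i => μ i.succ) (fun i => f i.succ) (fun i => hf i.succ)]
      _ = ∏ i, ∫⁻ x, f i x ∂(μ i) := by rw [Fin.prod_univ_succ]

theorem my_lintegral_pi_prod {ι : Type*} [Fintype ι] {E : ι → Type*} [∀ i, MeasurableSpace (E i)]
    (μ : ∀ i, Measure (E i)) [∀ i, SigmaFinite (μ i)]
    (f : ∀ i, E i → ℝ≥0∞) (hf : ∀ i, Measurable (f i)) :
    ∫⁻ x, ∏ i, f i (x i) ∂Measure.pi μ = ∏ i, ∫⁻ x, f i x ∂μ i := by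
  let e := (Fintype.equivFin ι).symm
  have hmeas : Measurable fun x : ∀ i, E i => ∏ i, f i (x i) :=
    Finset.measurable_prod _ fun i _ => (hf i).comp (measurable_pi_apply i)
  rw [← (measurePreserving_piCongrLeft μ e).lintegral_comp hmeas]
  have key : ∀ x : ∀ i', E (e i'), ∏ i, f i ((MeasurableEquiv.piCongrLeft E e) x i)
      = ∏ i', f (e i') (x i') := by
    intro x
    rw [← e.prod_comp]
    exact Finset.prod_congr rfl fun i' _ => by
      rw [MeasurableEquiv.coe_piCongrLeft, Equiv.piCongrLeft_apply_apply]
  simp_rw [key]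
  exact (my_lintegral_fin_prod _ _ fun i' => hf (e i')).trans (e.prod_comp fun i => ∫⁻ x, f i x ∂μ i)

theorem my_pi_withDensity {ι : Type*} [Fintype ι] {E : ι → Type*} [∀ i, MeasurableSpace (E i)]
    (ν : ∀ i, Measure (E i)) [∀ i, IsProbabilityMeasure (ν i)]
    (μ : ∀ i, Measure (E i)) [∀ i, IsProbabilityMeasure (μ i)]
    (f : ∀ i, E i → ℝ≥0∞) (hf : ∀ i, Measurable (f i))
    (h : ∀ i, μ i = (ν i).withDensity (f i)) :
    Measure.pi μ = (Measure.pi ν).withDensity (fun x => ∏ i, f i (x i)) := by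
  refine Measure.pi_eq fun s hs => ?_
  have hG : Measurable fun x : ∀ i, E i => ∏ i, f i (x i) :=
    Finset.measurable_prod _ fun i _ => (hf i).comp (measurable_pi_apply i)
  rw [withDensity_apply _ (MeasurableSet.univ_pi hs)]
  have : ∀ x : ∀ i, E i, (Set.univ.pi s).indicator (fun x => ∏ i, f i (x i)) x
      = ∏ i, (s i).indicator (f i) (x i) := by
    intro x
    by_cases hx : x ∈ Set.univ.pi s
    · rw [Set.indicator_of_mem hx]
      exact Finset.prod_congr rfl fun i _ =>
        (Set.indicator_of_mem (hx i (Set.mem_univ i)) _).symm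
    · rw [Set.indicator_of_notMem hx]
      obtain ⟨i, hi⟩ := by simpa [Set.mem_pi] using hx
      exact (Finset.prod_eq_zero (Finset.mem_univ i) (by
        rw [Set.indicator_of_notMem hi])).symm
  rw [← lintegral_indicator (MeasurableSet.univ_pi hs)]
  simp_rw [this]
  rw [my_lintegral_pi_prod ν _ (fun i => (hf i).indicator (hs i))]
  exact Finset.prod_congr rfl fun i _ => by
    rw [lintegral_indicator (hs i), ← withDensity_apply _ (hs i), ← h i]

section pair
variable {α : Type*} [MeasurableSpace α] {μ ν : Measure α}

theorem my_neg_log_le {t : ℝ} (ht : 0 < t) : -Real.log t ≤ t⁻¹ := by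
  have h := Real.log_le_sub_one_of_pos (inv_pos.2 ht)
  rw [Real.log_inv] at h
  linarith

theorem my_one_sub_inv_le_log {t : ℝ} (ht : 0 < t) : 1 - t⁻¹ ≤ Real.log t := by
  have h := Real.log_le_sub_one_of_pos (inv_pos.2 ht)
  rw [Real.log_inv] at h
  linarith

theorem my_lintegral_inv_rnDeriv [IsProbabilityMeasure μ] [IsProbabilityMeasure ν]
    (hac : μ ≪ ν) : ∫⁻ x, (μ.rnDeriv ν x)⁻¹ ∂μ ≤ 1 := by
  have key := lintegral_withDensity_eq_lintegral_mul ν (Measure.measurable_rnDeriv μ ν)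
    (Measure.measurable_rnDeriv μ ν).inv
  rw [Measure.withDensity_rnDeriv_eq μ ν hac] at key
  simp only [Pi.mul_apply, Pi.inv_apply] at key
  rw [key]
  calc ∫⁻ x, (μ.rnDeriv ν x * (μ.rnDeriv ν x)⁻¹) ∂ν ≤ ∫⁻ _, 1 ∂ν := by
        refine lintegral_mono fun x => ?_
        rcases eq_or_ne (μ.rnDeriv ν x) 0 with h | h
        · simp [h]
        rcases eq_or_ne (μ.rnDeriv ν x) ∞ with h' | h'
        · simp [h']
        · rw [ENNReal.mul_inv_cancel h h']
    _ = 1 := by simp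

theorem my_integrable_inv_rnDeriv [IsProbabilityMeasure μ] [IsProbabilityMeasure ν]
    (hac : μ ≪ ν) : Integrable (fun x => ((μ.rnDeriv ν x).toReal)⁻¹) μ := by
  refine ⟨((Measure.measurable_rnDeriv μ ν).ennreal_toReal.inv).aestronglyMeasurable, ?_⟩
  rw [hasFiniteIntegral_iff_ofReal (Filter.Eventually.of_forall fun x => by positivity)]
  refine lt_of_le_of_lt (lintegral_mono fun x => ?_) (lt_of_le_of_lt
    (my_lintegral_inv_rnDeriv hac) ENNReal.one_lt_top)
  rw [← ENNReal.toReal_inv]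
  exact ENNReal.ofReal_toReal_le

theorem my_integral_inv_rnDeriv_le_one [IsProbabilityMeasure μ] [IsProbabilityMeasure ν]
    (hac : μ ≪ ν) : ∫ x, ((μ.rnDeriv ν x).toReal)⁻¹ ∂μ ≤ 1 := by
  rw [integral_eq_lintegral_of_nonneg_ae (f := fun x => ((μ.rnDeriv ν x).toReal)⁻¹) (Filter.Eventually.of_forall fun x => by positivity)
    ((Measure.measurable_rnDeriv μ ν).ennreal_toReal.inv).aestronglyMeasurable]
  refine ENNReal.toReal_le_of_le_ofReal zero_le_one ?_
  rw [ENNReal.ofReal_one]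
  refine le_trans (lintegral_mono fun x => ?_) (my_lintegral_inv_rnDeriv hac)
  rw [← ENNReal.toReal_inv]
  exact ENNReal.ofReal_toReal_le

theorem my_rnDeriv_toReal_pos [IsProbabilityMeasure μ] [IsProbabilityMeasure ν]
    (hac : μ ≪ ν) : ∀ᵐ x ∂μ, 0 < (μ.rnDeriv ν x).toReal := by
  filter_upwards [Measure.rnDeriv_pos hac, hac.ae_le (Measure.rnDeriv_ne_top μ ν)]
    with x h1 h2
  exact ENNReal.toReal_pos h1.ne' h2

theorem my_gibbs [IsProbabilityMeasure μ] [IsProbabilityMeasure ν] (hac : μ ≪ ν)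
    (hint : Integrable (fun x => Real.log ((μ.rnDeriv ν x).toReal)) μ) :
    0 ≤ ∫ x, Real.log ((μ.rnDeriv ν x).toReal) ∂μ := by
  have hφ := my_integrable_inv_rnDeriv hac
  have h1 : ∫ x, (1 - ((μ.rnDeriv ν x).toReal)⁻¹) ∂μ ≤
      ∫ x, Real.log ((μ.rnDeriv ν x).toReal) ∂μ := by
    refine integral_mono_ae ((integrable_const 1).sub hφ) hint ?_
    filter_upwards [my_rnDeriv_toReal_pos hac] with x hx
    exact my_one_sub_inv_le_log hx
  have h2 : ∫ x, (1 - ((μ.rnDeriv ν x).toReal)⁻¹) ∂μ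
      = 1 - ∫ x, ((μ.rnDeriv ν x).toReal)⁻¹ ∂μ := by
    rw [integral_sub (integrable_const 1) hφ]
    simp
  have := my_integral_inv_rnDeriv_le_one hac
  linarith

end pair

theorem my_main {I : Type*} [Fintype I] {X : I → Type*} [∀ i, MeasurableSpace (X i)]
    (μ : Measure (∀ i, X i)) [IsProbabilityMeasure μ]
    (ν μm : ∀ i, Measure (X i)) [∀ i, IsProbabilityMeasure (ν i)]
    [∀ i, IsProbabilityMeasure (μm i)]
    (hmarg : ∀ i, Measure.map (fun x => x i) μ = μm i)
    (hac : μ ≪ Measure.pi ν) :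
    klDiv μ (Measure.pi ν) = klDiv μ (Measure.pi μm) + ∑ i, klDiv (μm i) (ν i) := by
  classical
  set π := Measure.pi ν with hπ_def
  set m := Measure.pi μm with hm_def
  have hev : ∀ i, Measurable fun x : ∀ j, X j => x i := fun i => measurable_pi_apply i
  -- the i-th marginal of π is ν i
  have hmap_pi : ∀ i, Measure.map (fun x : ∀ j, X j => x i) π = ν i := by
    intro i
    ext s hs
    rw [Measure.map_apply (hev i) hs]
    have hpre : (fun x : ∀ j, X j => x i) ⁻¹' s
        = Set.pi Set.univ (Function.update (fun j => (Set.univ : Set (X j))) i s) := by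
      ext x
      simp only [Set.mem_preimage, Set.mem_pi, Set.mem_univ, forall_true_left]
      constructor
      · intro hx j
        rcases eq_or_ne j i with rfl | hj
        · rwa [Function.update_self]
        · rw [Function.update_of_ne hj]; trivial
      · intro hx
        have := hx i
        rwa [Function.update_self] at this
    rw [hpre, Measure.pi_pi,
      Finset.prod_eq_single_of_mem i (Finset.mem_univ i) (fun j _ hj => by
        rw [Function.update_of_ne hj]; exact measure_univ),
      Function.update_self]
  -- the marginals are absolutely continuous
  have haci : ∀ i, μm i ≪ ν i := fun i => by
    rw [← hmarg i, ← hmap_pi i]; exact hac.map (hev i)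
  -- the density of the product of marginals
  set g : ∀ i, X i → ℝ≥0∞ := fun i => (μm i).rnDeriv (ν i) with hg_def
  have hgm : ∀ i, Measurable (g i) := fun i => Measure.measurable_rnDeriv _ _
  set G : (∀ j, X j) → ℝ≥0∞ := fun x => ∏ i, g i (x i) with hG_def
  have hGm : Measurable G :=
    Finset.measurable_prod _ fun i _ => (hgm i).comp (hev i)
  have hm_eq : m = π.withDensity G :=
    my_pi_withDensity ν μm g hgm fun i => (Measure.withDensity_rnDeriv_eq _ _ (haci i)).symm
  -- a.e. positivity and finiteness of the coordinate densities
  have hgpos : ∀ i, ∀ᵐ x ∂μ, 0 < g i (x i) := by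
    intro i
    have h : ∀ᵐ y ∂(Measure.map (fun x : ∀ j, X j => x i) μ), 0 < g i y := by
      rw [hmarg i]; exact Measure.rnDeriv_pos (haci i)
    exact ae_of_ae_map (hev i).aemeasurable h
  have hgfin : ∀ i, ∀ᵐ x ∂μ, g i (x i) ≠ ∞ := by
    intro i
    have h : ∀ᵐ y ∂(Measure.map (fun x : ∀ j, X j => x i) μ), g i y ≠ ∞ := by
      rw [hmarg i]; exact (haci i).ae_le (Measure.rnDeriv_ne_top _ _)
    exact ae_of_ae_map (hev i).aemeasurable h
  have hGne : ∀ᵐ x ∂μ, G x ≠ 0 := by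
    filter_upwards [ae_all_iff.2 hgpos] with x hx
    exact Finset.prod_ne_zero_iff.2 fun i _ => (hx i).ne'
  -- μ is absolutely continuous w.r.t. the product of its marginals
  have hμm_ac : μ ≪ m := by
    rw [hm_eq]
    refine Measure.AbsolutelyContinuous.mk fun A hA h0 => ?_
    rw [withDensity_apply _ hA] at h0
    have hsetm : MeasurableSet {x | G x ≠ 0} := (hGm (measurableSet_singleton 0)).compl
    have h1 : π (A ∩ {x | G x ≠ 0}) = 0 := by
      have h2 := (setLIntegral_eq_zero_iff hA hGm).1 h0
      have h3 : π {a | ¬ (a ∈ A → G a = 0)} = 0 := ae_iff.1 h2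
      exact measure_mono_null (fun x hx => fun h => hx.2 (h hx.1)) h3
    have h2 : μ (A ∩ {x | G x ≠ 0}) = 0 := hac h1
    have h3 : μ {x | G x = 0} = 0 := by
      have h4 := ae_iff.1 hGne
      simpa using h4
    refine le_antisymm ?_ zero_le
    calc μ A ≤ μ ((A ∩ {x | G x ≠ 0}) ∪ {x | G x = 0}) := by
          refine measure_mono fun x hxA => ?_
          by_cases h : G x = 0
          · exact Or.inr h
          · exact Or.inl ⟨hxA, h⟩
      _ ≤ μ (A ∩ {x | G x ≠ 0}) + μ {x | G x = 0} := measure_union_le _ _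
      _ = 0 := by rw [h2, h3, add_zero]
  -- the chain rule for the densities
  have hchain : ∀ᵐ x ∂μ, μ.rnDeriv π x = μ.rnDeriv m x * G x := by
    have h1 := Measure.rnDeriv_mul_rnDeriv (κ := π) hμm_ac
    have h2 : m.rnDeriv π =ᵐ[π] G := by
      rw [hm_eq]; exact Measure.rnDeriv_withDensity π hGm
    filter_upwards [hac.ae_le h1, hac.ae_le h2] with x hx1 hx2
    rw [← hx1, Pi.mul_apply, hx2]
  -- the real-valued log densities
  set L : (∀ j, X j) → ℝ := fun x => Real.log ((μ.rnDeriv π x).toReal) with hL_def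
  set H : (∀ j, X j) → ℝ := fun x => Real.log ((μ.rnDeriv m x).toReal) with hH_def
  set B : ∀ _ : I, (∀ j, X j) → ℝ := fun i x => Real.log ((g i (x i)).toReal) with hB_def
  have hHm : Measurable H := Real.measurable_log.comp (Measure.measurable_rnDeriv μ m).ennreal_toReal
  have hBm : ∀ i, Measurable (B i) := fun i =>
    Real.measurable_log.comp ((hgm i).comp (hev i)).ennreal_toReal
  -- the a.e. decomposition L = H + ∑ B i
  have heq : ∀ᵐ x ∂μ, L x = H x + ∑ i, B i x := by
    filter_upwards [hchain, Measure.rnDeriv_pos hμm_ac,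
      hμm_ac.ae_le (Measure.rnDeriv_ne_top μ m), ae_all_iff.2 hgpos, ae_all_iff.2 hgfin]
      with x hx hp hf hgp hgf
    have hHne : (μ.rnDeriv m x).toReal ≠ 0 := (ENNReal.toReal_pos hp.ne' hf).ne'
    have hBne : ∀ i, (g i (x i)).toReal ≠ 0 := fun i =>
      (ENNReal.toReal_pos (hgp i).ne' (hgf i)).ne'
    simp only [hL_def, hH_def, hB_def]
    rw [hx, ENNReal.toReal_mul, hG_def, ENNReal.toReal_prod,
      Real.log_mul hHne (Finset.prod_ne_zero_iff.2 fun i _ => hBne i),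
      Real.log_prod fun i _ => hBne i]
  -- the dominating functions
  set φH : (∀ j, X j) → ℝ := fun x => ((μ.rnDeriv m x).toReal)⁻¹ with hφH_def
  set φ : ∀ _ : I, (∀ j, X j) → ℝ := fun i x => ((g i (x i)).toReal)⁻¹ with hφ_def
  have hφH_int : Integrable φH μ := my_integrable_inv_rnDeriv hμm_ac
  have hφ_int : ∀ i, Integrable (φ i) μ := by
    intro i
    have base := integrable_map_measure (μ := μ) (f := fun x : ∀ j, X j => x i)
      ((Measure.measurable_rnDeriv (μm i) (ν i)).ennreal_toReal.inv).aestronglyMeasurable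
      (hev i).aemeasurable
    rw [hmarg i] at base
    exact base.1 (my_integrable_inv_rnDeriv (haci i))
  have hφH_nonneg : ∀ x, 0 ≤ φH x := fun x => by positivity
  have hφ_nonneg : ∀ i x, 0 ≤ φ i x := fun i x => by positivity
  -- lower bounds
  have hHlb : ∀ᵐ x ∂μ, -φH x ≤ H x := by
    filter_upwards [Measure.rnDeriv_pos hμm_ac, hμm_ac.ae_le (Measure.rnDeriv_ne_top μ m)]
      with x hp hf
    have := my_neg_log_le (ENNReal.toReal_pos hp.ne' hf)
    simp only [hH_def, hφH_def]; linarith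
  have hBlb : ∀ i, ∀ᵐ x ∂μ, -φ i x ≤ B i x := fun i => by
    filter_upwards [hgpos i, hgfin i] with x hp hf
    have := my_neg_log_le (ENNReal.toReal_pos hp.ne' hf)
    simp only [hB_def, hφ_def]; linarith
  -- transfer of integrability of B i to the marginal
  have hB_iff : ∀ i, Integrable (fun y => Real.log (((μm i).rnDeriv (ν i) y).toReal)) (μm i)
      ↔ Integrable (B i) μ := fun i => by
    have base := integrable_map_measure (μ := μ) (f := fun x : ∀ j, X j => x i)
      (Real.measurable_log.comp
        (Measure.measurable_rnDeriv (μm i) (ν i)).ennreal_toReal).aestronglyMeasurable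
      (hev i).aemeasurable
    rw [hmarg i] at base
    exact base
  by_cases hL : Integrable L μ
  · -- the integrable case
    have hdom : Integrable (fun x => |L x| + φH x + ∑ i, φ i x) μ :=
      (hL.abs.add hφH_int).add (integrable_finset_sum _ fun i _ => hφ_int i)
    have hH_int : Integrable H μ := by
      refine hdom.mono' hHm.aestronglyMeasurable ?_
      filter_upwards [heq, ae_all_iff.2 hBlb, hHlb] with x hx hbx hhx
      rw [Real.norm_eq_abs, abs_le]
      have h0 : 0 ≤ |L x| := abs_nonneg _
      have h1 : 0 ≤ ∑ i, φ i x := Finset.sum_nonneg fun i _ => hφ_nonneg i x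
      constructor
      · have := hφH_nonneg x; linarith
      · have h3 : -∑ i, φ i x ≤ ∑ i, B i x := by
          rw [← Finset.sum_neg_distrib]
          exact Finset.sum_le_sum fun i _ => hbx i
        have h4 := le_abs_self (L x)
        have := hφH_nonneg x
        linarith
    have hP_int : Integrable (fun x => (L x - H x) + ∑ i, φ i x) μ :=
      (hL.sub hH_int).add (integrable_finset_sum _ fun i _ => hφ_int i)
    have hB_int : ∀ i, Integrable (B i) μ := by
      intro i
      have hBφ : Integrable (fun x => B i x + φ i x) μ := by
        refine hP_int.mono' ((hBm i).add ((hgm i).comp (hev i)).ennreal_toReal.inv).aestronglyMeasurable ?_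
        filter_upwards [heq, ae_all_iff.2 hBlb] with x hx hbx
        have hnn : 0 ≤ B i x + φ i x := by linarith [hbx i]
        rw [Real.norm_eq_abs, abs_of_nonneg hnn]
        have hle : B i x + φ i x ≤ ∑ j, (B j x + φ j x) :=
          Finset.single_le_sum (f := fun j => B j x + φ j x)
            (fun j _ => by show 0 ≤ B j x + φ j x; linarith [hbx j]) (Finset.mem_univ i)
        rw [Finset.sum_add_distrib] at hle
        have hsB : ∑ j, B j x = L x - H x := by linarith
        linarith
      refine (hBφ.sub (hφ_int i)).congr (Filter.Eventually.of_forall fun x => ?_)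
      show (B i x + φ i x) - φ i x = B i x
      ring
    have hint_eq : ∫ x, L x ∂μ = ∫ x, H x ∂μ + ∑ i, ∫ x, B i x ∂μ := by
      rw [integral_congr_ae heq,
        integral_add hH_int (integrable_finset_sum _ fun i _ => hB_int i),
        integral_finset_sum _ fun i _ => hB_int i]
    have hmarg_int : ∀ i, ∫ x, B i x ∂μ
        = ∫ y, Real.log (((μm i).rnDeriv (ν i) y).toReal) ∂(μm i) := fun i => by
      have base := integral_map (μ := μ) (φ := fun x : ∀ j, X j => x i) (hev i).aemeasurable
        (Real.measurable_log.comp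
          (Measure.measurable_rnDeriv (μm i) (ν i)).ennreal_toReal).aestronglyMeasurable
      rw [hmarg i] at base
      exact base.symm
    have hH_nonneg : 0 ≤ ∫ x, H x ∂μ := my_gibbs hμm_ac hH_int
    have hB_nonneg : ∀ i, 0 ≤ ∫ x, B i x ∂μ := fun i => by
      rw [hmarg_int i]
      exact my_gibbs (haci i) ((hB_iff i).2 (hB_int i))
    rw [klDiv, if_pos ⟨hac, hL⟩, klDiv, if_pos ⟨hμm_ac, hH_int⟩]
    have hsum : ∑ i, klDiv (μm i) (ν i) = ∑ i, ENNReal.ofReal (∫ x, B i x ∂μ) := by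
      refine Finset.sum_congr rfl fun i _ => ?_
      rw [klDiv, if_pos ⟨haci i, (hB_iff i).2 (hB_int i)⟩, hmarg_int i]
    rw [hsum, hint_eq, ENNReal.ofReal_add hH_nonneg
        (Finset.sum_nonneg fun i _ => hB_nonneg i),
      ENNReal.ofReal_sum_of_nonneg fun i _ => hB_nonneg i]
  · -- the non-integrable case
    rw [klDiv, if_neg fun h => hL h.2]
    by_cases hH : Integrable H μ
    · by_cases hB : ∀ i, Integrable (B i) μ
      · exact absurd ((hH.add (integrable_finset_sum _ fun i _ => hB i)).congr
          (Filter.EventuallyEq.symm heq)) hL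
      · push_neg at hB
        obtain ⟨i, hBi⟩ := hB
        have htop : klDiv (μm i) (ν i) = ⊤ := by
          rw [klDiv, if_neg]
          rintro ⟨-, h⟩
          exact hBi ((hB_iff i).1 h)
        rw [eq_comm, ENNReal.add_eq_top]
        exact Or.inr (ENNReal.sum_eq_top.2 ⟨i, Finset.mem_univ i, htop⟩)
    · have htop : klDiv μ m = ⊤ := by
        rw [klDiv, if_neg]
        rintro ⟨-, h⟩
        exact hH h
      simp [htop]

end KLAux

/-- Pythagorean identity for the KL divergence to a product measure:
`D(μ ‖ ⊗ᵢ νᵢ) = D(μ ‖ ⊗ᵢ μᵢ) + Σᵢ D(μᵢ ‖ νᵢ)`, where `μᵢ` are the marginals of `μ`. -/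
theorem klDiv_product_pythagorean
    {I : Type*} [Fintype I] [Nonempty I] {X : I → Type*}
    [∀ i, MeasurableSpace (X i)]
    (μ : Measure (∀ i, X i)) [IsProbabilityMeasure μ]
    (ν : ∀ i, Measure (X i)) [∀ i, IsProbabilityMeasure (ν i)]
    (hac : μ ≪ Measure.pi ν) :
    klDiv μ (Measure.pi ν) =
      klDiv μ (Measure.pi (fun i => Measure.map (fun x => x i) μ)) +
        ∑ i, klDiv (Measure.map (fun x => x i) μ) (ν i) := by
  haveI : ∀ i, IsProbabilityMeasure (Measure.map (fun x : ∀ j, X j => x i) μ) :=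
    fun i => Measure.isProbabilityMeasure_map (measurable_pi_apply i).aemeasurable
  exact my_main μ ν (fun i => Measure.map (fun x => x i) μ) (fun _ => rfl) hac
end

section
/- Let (X, 𝒜, λ₀) be a σ-finite measure space, let p : X → ℝ≥0 be measurable with ∫ p dλ₀ = 1, let r ∈ [0,1], and let p^D : X → [0,1] be measurable. Consider the probability measure on Option X × Bool (state paired with a detection indicator) under which: the state is none with probability 1−r and then the indicator is false with probability 1; and the state lies in some(A) with probability r·∫_A p dλ₀ for measurable A ⊆ X, and conditionally on state some x the indicator is true with probability p^D(x) and false with probability 1−p^D(x). Then the marginal probability that the indicator is false equals 1 − r·∫ p^D p dλ₀; and if this quantity is positive, then conditionally on the indicator being false, the probability that the state is not none equals r·∫ (1−p^D) p dλ₀ / (1 − r·∫ p^D p dλ₀), and for every measurable A ⊆ X the conditional probability that the state lies in some(A) equals r·∫_A (1−p^D) p dλ₀ / (1 − r·∫ p^D p dλ₀). -/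
open MeasureTheory
open scoped ENNReal NNReal

/-- Measurable-space structure on `Option X`, via the identification
`Option X ≃ X ⊕ PUnit`. -/
instance optionMeasurableSpace {X : Type*} [MeasurableSpace X] :
    MeasurableSpace (Option X) :=
  MeasurableSpace.comap (fun o : Option X => o.elim (Sum.inr ()) Sum.inl : Option X → X ⊕ Unit) inferInstance

lemma measurable_some_opt {X : Type*} [MeasurableSpace X] :
    Measurable (fun x : X => (some x : Option X)) := by
  intro t ht
  obtain ⟨s, hs, rfl⟩ := ht
  exact measurable_inl hs

lemma measurableSet_ne_none {X : Type*} [MeasurableSpace X] :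
    MeasurableSet {o : Option X | o ≠ none} := by
  have h : {o : Option X | o ≠ none}
      = (fun o : Option X => o.elim (Sum.inr ()) Sum.inl) ⁻¹' (Set.range Sum.inl) := by
    ext o; cases o <;> simp
  rw [h]
  exact comap_measurable _ measurableSet_range_inl

lemma measurableSet_some_mem {X : Type*} [MeasurableSpace X] {A : Set X}
    (hA : MeasurableSet A) :
    MeasurableSet {o : Option X | ∃ x ∈ A, o = some x} := by
  have h : {o : Option X | ∃ x ∈ A, o = some x}
      = (fun o : Option X => o.elim (Sum.inr ()) Sum.inl) ⁻¹' (Sum.inl '' A) := by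
    ext o; cases o <;> simp
  rw [h]
  exact comap_measurable _ hA.inl_image

/-- Misdetection update of a Bernoulli component.  A Bernoulli component with
existence probability `r` and density `p` (w.r.t. `λ₀`), detected with
state-dependent probability `p^D`, is modeled as the law `κ` on
`Option X × Bool` (state, detection indicator).  Then the probability of
misdetection (indicator `false`) is `1 − r⟨p, p^D⟩`; and, when this is positive,
conditionally on misdetection the existence probability is
`r⟨p, 1−p^D⟩ / (1 − r⟨p, p^D⟩)` and the state distribution on any measurable `A`
is `r∫_A (1−p^D) p dλ₀ / (1 − r⟨p, p^D⟩)`. -/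
theorem bernoulli_misdetection_update {X : Type*} [MeasurableSpace X]
    (lam0 : Measure X) [SigmaFinite lam0]
    (p : X → ℝ≥0) (hp : Measurable p) (hp1 : ∫⁻ x, (p x : ℝ≥0∞) ∂lam0 = 1)
    (r : ℝ≥0) (hr : r ≤ 1)
    (pD : X → ℝ≥0) (hpD : Measurable pD) (hpD1 : ∀ x, pD x ≤ 1)
    (κ : Measure (Option X × Bool))
    (hκ : κ = ((1 - r : ℝ≥0) • Measure.dirac ((none : Option X), false))
        + Measure.map (fun x => ((some x : Option X), true))
            (lam0.withDensity (fun x => (r : ℝ≥0∞) * (p x : ℝ≥0∞) * (pD x : ℝ≥0∞)))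
        + Measure.map (fun x => ((some x : Option X), false))
            (lam0.withDensity
              (fun x => (r : ℝ≥0∞) * (p x : ℝ≥0∞) * (1 - (pD x : ℝ≥0∞))))) :
    κ {ω | ω.2 = false} = 1 - (r : ℝ≥0∞) * ∫⁻ x, (pD x : ℝ≥0∞) * (p x : ℝ≥0∞) ∂lam0 ∧
      (0 < 1 - (r : ℝ≥0∞) * ∫⁻ x, (pD x : ℝ≥0∞) * (p x : ℝ≥0∞) ∂lam0 →
        (κ {ω | ω.1 ≠ none ∧ ω.2 = false} / κ {ω | ω.2 = false} =
            (r : ℝ≥0∞) * (∫⁻ x, (1 - (pD x : ℝ≥0∞)) * (p x : ℝ≥0∞) ∂lam0) /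
              (1 - (r : ℝ≥0∞) * ∫⁻ x, (pD x : ℝ≥0∞) * (p x : ℝ≥0∞) ∂lam0)) ∧
          ∀ A : Set X, MeasurableSet A →
            κ {ω | (∃ x ∈ A, ω.1 = some x) ∧ ω.2 = false} / κ {ω | ω.2 = false} =
              (r : ℝ≥0∞) * (∫⁻ x in A, (1 - (pD x : ℝ≥0∞)) * (p x : ℝ≥0∞) ∂lam0) /
                (1 - (r : ℝ≥0∞) * ∫⁻ x, (pD x : ℝ≥0∞) * (p x : ℝ≥0∞) ∂lam0)) := by
  -- basic measurability
  have hmt : Measurable (fun x : X => ((some x : Option X), true)) :=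
    measurable_some_opt.prodMk measurable_const
  have hmf : Measurable (fun x : X => ((some x : Option X), false)) :=
    measurable_some_opt.prodMk measurable_const
  have hpc : Measurable (fun x => (p x : ℝ≥0∞)) := hp.coe_nnreal_ennreal
  have hpDc : Measurable (fun x => (pD x : ℝ≥0∞)) := hpD.coe_nnreal_ennreal
  have hmis : Measurable (fun x => (1 - (pD x : ℝ≥0∞)) * (p x : ℝ≥0∞)) :=
    (measurable_const.sub hpDc).mul hpc
  -- notation
  set t : ℝ≥0∞ := ∫⁻ x, (pD x : ℝ≥0∞) * (p x : ℝ≥0∞) ∂lam0 with ht_def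
  have hpDp_le : ∀ x, (pD x : ℝ≥0∞) * (p x : ℝ≥0∞) ≤ (p x : ℝ≥0∞) := fun x =>
    mul_le_of_le_one_left zero_le (by exact_mod_cast hpD1 x)
  have ht1 : t ≤ 1 := by
    rw [ht_def, ← hp1]; exact lintegral_mono hpDp_le
  have htne : t ≠ ∞ := (ht1.trans_lt ENNReal.one_lt_top).ne
  have hr1 : (r : ℝ≥0∞) ≤ 1 := by exact_mod_cast hr
  have hrt : (r : ℝ≥0∞) * t ≤ (r : ℝ≥0∞) := by
    calc (r : ℝ≥0∞) * t ≤ (r : ℝ≥0∞) * 1 := mul_le_mul_right ht1 _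
    _ = r := mul_one _
  -- value of the misdetection integral
  have hkey : ∫⁻ x, (1 - (pD x : ℝ≥0∞)) * (p x : ℝ≥0∞) ∂lam0 = 1 - t := by
    have hptw : ∀ x, (1 - (pD x : ℝ≥0∞)) * (p x : ℝ≥0∞)
        = (p x : ℝ≥0∞) - (pD x : ℝ≥0∞) * (p x : ℝ≥0∞) := fun x => by
      rw [ENNReal.sub_mul (fun _ _ => ENNReal.coe_ne_top), one_mul]
    rw [lintegral_congr hptw,
      lintegral_sub (g := fun x => (pD x : ℝ≥0∞) * (p x : ℝ≥0∞)) (hpDc.mul hpc) htne (Filter.Eventually.of_forall hpDp_le), hp1]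
  -- the density integrals, rewritten
  have hIM : ∀ (μ : Measure X),
      ∫⁻ x, (r : ℝ≥0∞) * (p x : ℝ≥0∞) * (1 - (pD x : ℝ≥0∞)) ∂μ
        = (r : ℝ≥0∞) * ∫⁻ x, (1 - (pD x : ℝ≥0∞)) * (p x : ℝ≥0∞) ∂μ := by
    intro μ
    have h1 : ∀ x, (r : ℝ≥0∞) * (p x : ℝ≥0∞) * (1 - (pD x : ℝ≥0∞))
        = (r : ℝ≥0∞) * ((1 - (pD x : ℝ≥0∞)) * (p x : ℝ≥0∞)) := fun x => by ring
    rw [lintegral_congr h1, lintegral_const_mul _ hmis]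
  -- measurable sets
  have hS0 : MeasurableSet {ω : Option X × Bool | ω.2 = false} :=
    measurable_snd (measurableSet_singleton false)
  have hS1 : MeasurableSet {ω : Option X × Bool | ω.1 ≠ none ∧ ω.2 = false} := by
    have : {ω : Option X × Bool | ω.1 ≠ none ∧ ω.2 = false}
        = (Prod.fst ⁻¹' {o : Option X | o ≠ none}) ∩ (Prod.snd ⁻¹' {false}) := rfl
    rw [this]
    exact (measurable_fst measurableSet_ne_none).inter
      (measurable_snd (measurableSet_singleton false))
  -- measure of the misdetection event
  have hκ0 : κ {ω | ω.2 = false} = (1 - (r : ℝ≥0∞)) + (r : ℝ≥0∞) * (1 - t) := by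
    rw [hκ]
    have hpre1 : (fun x : X => ((some x : Option X), true)) ⁻¹'
        {ω : Option X × Bool | ω.2 = false} = ∅ := by ext x; simp
    have hpre2 : (fun x : X => ((some x : Option X), false)) ⁻¹'
        {ω : Option X × Bool | ω.2 = false} = Set.univ := by ext x; simp
    rw [Measure.add_apply, Measure.add_apply, Measure.smul_apply,
      Measure.map_apply hmt hS0, Measure.map_apply hmf hS0, hpre1, hpre2,
      measure_empty, Measure.dirac_apply' _ hS0]
    have hmem : ((none : Option X), false) ∈ {ω : Option X × Bool | ω.2 = false} := rfl
    rw [Set.indicator_of_mem hmem, withDensity_apply _ MeasurableSet.univ,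
      Measure.restrict_univ, hIM lam0, hkey, ENNReal.smul_def, smul_eq_mul, Pi.one_apply, mul_one,
      ENNReal.coe_sub, ENNReal.coe_one, add_zero]
  have hκ0' : κ {ω | ω.2 = false} = 1 - (r : ℝ≥0∞) * t := by
    rw [hκ0, ENNReal.mul_sub (fun _ _ => ENNReal.coe_ne_top), mul_one,
      tsub_add_tsub_cancel hr1 hrt]
  refine ⟨hκ0', fun _ => ⟨?_, ?_⟩⟩
  · -- existence event
    have hκ1 : κ {ω | ω.1 ≠ none ∧ ω.2 = false}
        = (r : ℝ≥0∞) * ∫⁻ x, (1 - (pD x : ℝ≥0∞)) * (p x : ℝ≥0∞) ∂lam0 := by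
      rw [hκ]
      have hpre1 : (fun x : X => ((some x : Option X), true)) ⁻¹'
          {ω : Option X × Bool | ω.1 ≠ none ∧ ω.2 = false} = ∅ := by ext x; simp
      have hpre2 : (fun x : X => ((some x : Option X), false)) ⁻¹'
          {ω : Option X × Bool | ω.1 ≠ none ∧ ω.2 = false} = Set.univ := by ext x; simp
      rw [Measure.add_apply, Measure.add_apply, Measure.smul_apply,
        Measure.map_apply hmt hS1, Measure.map_apply hmf hS1, hpre1, hpre2,
        measure_empty, Measure.dirac_apply' _ hS1]
      have hmem : ((none : Option X), false) ∉
          {ω : Option X × Bool | ω.1 ≠ none ∧ ω.2 = false} := by simp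
      rw [Set.indicator_of_notMem hmem, withDensity_apply _ MeasurableSet.univ,
        Measure.restrict_univ, hIM lam0]
      simp
    rw [hκ1, hκ0']
  · -- events on measurable subsets
    intro A hA
    have hSA : MeasurableSet {ω : Option X × Bool | (∃ x ∈ A, ω.1 = some x) ∧ ω.2 = false} := by
      have : {ω : Option X × Bool | (∃ x ∈ A, ω.1 = some x) ∧ ω.2 = false}
          = (Prod.fst ⁻¹' {o : Option X | ∃ x ∈ A, o = some x}) ∩ (Prod.snd ⁻¹' {false}) := rfl
      rw [this]
      exact (measurable_fst (measurableSet_some_mem hA)).inter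
        (measurable_snd (measurableSet_singleton false))
    have hκA : κ {ω | (∃ x ∈ A, ω.1 = some x) ∧ ω.2 = false}
        = (r : ℝ≥0∞) * ∫⁻ x in A, (1 - (pD x : ℝ≥0∞)) * (p x : ℝ≥0∞) ∂lam0 := by
      rw [hκ]
      have hpre1 : (fun x : X => ((some x : Option X), true)) ⁻¹'
          {ω : Option X × Bool | (∃ x ∈ A, ω.1 = some x) ∧ ω.2 = false} = ∅ := by
        ext x; simp
      have hpre2 : (fun x : X => ((some x : Option X), false)) ⁻¹'
          {ω : Option X × Bool | (∃ x ∈ A, ω.1 = some x) ∧ ω.2 = false} = A := by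
        ext x; simp
      rw [Measure.add_apply, Measure.add_apply, Measure.smul_apply,
        Measure.map_apply hmt hSA, Measure.map_apply hmf hSA, hpre1, hpre2,
        measure_empty, Measure.dirac_apply' _ hSA]
      have hmem : ((none : Option X), false) ∉
          {ω : Option X × Bool | (∃ x ∈ A, ω.1 = some x) ∧ ω.2 = false} := by simp
      rw [Set.indicator_of_notMem hmem, withDensity_apply _ hA, hIM (lam0.restrict A)]
      simp
    rw [hκA, hκ0']
end
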